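/- Let P be a real polynomial of degree n ≥ 1, let s, t ∈ ℝ, let d > 0 and D ≥ 0 be real numbers such that |t − z| ≥ d for every complex root z of P and |s − t| ≤ D. Then |P(s)| ≤ (1 + D/d)^n · |P(t)|. -/

import Mathlib

open Polynomial

private lemma multiset_prod_map_le (m : Multiset ℂ) (f g : ℂ → ℝ)
    (hf : ∀ a, 0 ≤ f a) (h : ∀ a ∈ m, f a ≤ g a) :
    (m.map f).prod ≤ (m.map g).prod := by
  induction m using Multiset.induction with
  | empty => simp
  | cons a m ih =>
    simp only [Multiset.map_cons, Multiset.prod_cons]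
    have hprod : (0:ℝ) ≤ (m.map f).prod :=
      Multiset.prod_nonneg (by intro x hx; obtain ⟨a, _, rfl⟩ := Multiset.mem_map.mp hx; exact hf a)
    exact mul_le_mul (h a (Multiset.mem_cons_self a m))
      (ih fun x hx => h x (Multiset.mem_cons_of_mem hx)) hprod
      (le_trans (hf a) (h a (Multiset.mem_cons_self a m)))

/-- If `t` keeps distance at least `d > 0` from every complex root of the real polynomial `P`
of degree `n ≥ 1`, and `|s - t| ≤ D`, then `|P(s)| ≤ (1 + D/d)^n · |P(t)|`. -/
theorem abs_eval_le_of_dist_to_roots_ge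
    (P : Polynomial ℝ) (hP : 1 ≤ P.natDegree) (s t : ℝ) (d D : ℝ)
    (hd : 0 < d) (hD : 0 ≤ D)
    (hroots : ∀ z : ℂ, Polynomial.aeval z P = 0 → d ≤ ‖(t : ℂ) - z‖)
    (hst : |s - t| ≤ D) :
    |P.eval s| ≤ (1 + D / d) ^ P.natDegree * |P.eval t| := by
  have hP0 : P ≠ 0 := fun h => by simp [h] at hP
  set Q : Polynomial ℂ := P.map (algebraMap ℝ ℂ) with hQdef
  have hQ0 : Q ≠ 0 := (Polynomial.map_ne_zero_iff (algebraMap ℝ ℂ).injective).mpr hP0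
  have hsplits : Q.Splits := IsAlgClosed.splits _
  have hfact := hsplits.eq_prod_roots
  have hcard : Q.roots.card = P.natDegree := by
    rw [(Polynomial.splits_iff_card_roots).mp hsplits, Polynomial.natDegree_map]
  -- relate real and complex evaluations
  have heval : ∀ x : ℝ, Q.eval (x : ℂ) = ((P.eval x : ℝ) : ℂ) := by
    intro x
    rw [hQdef, Polynomial.eval_map]
    simpa using Polynomial.eval₂_at_apply (p := P) (algebraMap ℝ ℂ) x
  have key : ∀ x : ℝ, |P.eval x| =
      ‖Q.leadingCoeff‖ * (Q.roots.map fun a => ‖(x : ℂ) - a‖).prod := by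
    intro x
    rw [← Real.norm_eq_abs, ← Complex.norm_real, ← heval x]
    conv_lhs => rw [hfact]
    rw [Polynomial.eval_mul, Polynomial.eval_C, norm_mul, Polynomial.eval_multiset_prod]
    congr 1
    rw [show ∀ m : Multiset ℂ, ‖m.prod‖ = (m.map norm).prod from fun m => map_multiset_prod (normHom.toMonoidHom : ℂ →* ℝ) m, Multiset.map_map, Multiset.map_map]
    refine congrArg _ (Multiset.map_congr rfl fun a _ => ?_)
    simp [Function.comp]
  have hroot : ∀ a ∈ Q.roots, d ≤ ‖(t : ℂ) - a‖ := by
    intro a ha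
    apply hroots
    have := Polynomial.isRoot_of_mem_roots ha
    rwa [Polynomial.IsRoot, hQdef, Polynomial.eval_map, ← Polynomial.aeval_def] at this
  have hpt : ∀ a ∈ Q.roots,
      ‖(s : ℂ) - a‖ ≤ (1 + D / d) * ‖(t : ℂ) - a‖ := by
    intro a ha
    have h1 : ‖(s : ℂ) - a‖ ≤ D + ‖(t : ℂ) - a‖ := by
      calc ‖(s : ℂ) - a‖ = ‖((s : ℂ) - t) + ((t : ℂ) - a)‖ := by ring_nf
        _ ≤ ‖(s : ℂ) - t‖ + ‖(t : ℂ) - a‖ := norm_add_le _ _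
        _ ≤ D + ‖(t : ℂ) - a‖ := by
            have : ‖(s : ℂ) - t‖ = |s - t| := by
              rw [← Complex.ofReal_sub, Complex.norm_real, Real.norm_eq_abs]
            linarith [this ▸ hst]
    have h2 : D ≤ (D / d) * ‖(t : ℂ) - a‖ := by
      have := hroot a ha
      calc D = (D / d) * d := by field_simp
        _ ≤ (D / d) * ‖(t : ℂ) - a‖ :=
            mul_le_mul_of_nonneg_left this (div_nonneg hD hd.le)
    nlinarith [h1, h2]
  have hprodle : (Q.roots.map fun a => ‖(s : ℂ) - a‖).prod ≤
      (Q.roots.map fun a => (1 + D / d) * ‖(t : ℂ) - a‖).prod :=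
    multiset_prod_map_le _ _ _ (fun a => norm_nonneg _) hpt
  have hsplit : (Q.roots.map fun a => (1 + D / d) * ‖(t : ℂ) - a‖).prod =
      (1 + D / d) ^ P.natDegree * (Q.roots.map fun a => ‖(t : ℂ) - a‖).prod := by
    rw [show (fun a => (1 + D / d) * ‖(t : ℂ) - a‖) =
        (fun a => (fun _ : ℂ => (1 + D / d)) a * (fun a => ‖(t : ℂ) - a‖) a) from rfl,
      Multiset.prod_map_mul, Multiset.map_const', Multiset.prod_replicate, hcard]
  rw [key s, key t]
  calc ‖Q.leadingCoeff‖ * (Q.roots.map fun a => ‖(s : ℂ) - a‖).prod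
      ≤ ‖Q.leadingCoeff‖ *
        ((1 + D / d) ^ P.natDegree * (Q.roots.map fun a => ‖(t : ℂ) - a‖).prod) := by
        apply mul_le_mul_of_nonneg_left _ (norm_nonneg _)
        rw [← hsplit]; exact hprodle
    _ = (1 + D / d) ^ P.natDegree *
        (‖Q.leadingCoeff‖ * (Q.roots.map fun a => ‖(t : ℂ) - a‖).prod) := by
        ring
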